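/- arXiv:1105.3712 — 4 statements merged into one kernel-verified Lean document; each statement's English description precedes it below -/
import Mathlib

section
/- If H' is a spanning subgraph of H obtained from H by removing some edges (same vertex set, edge set contained in that of H), then ρ_R(H') ≥ ρ_R(H). -/
/-- `ArrowsR G H` (written `G →r H`) means: every proper vertex coloring of `G`
contains a rainbow induced subgraph isomorphic to `H`, i.e. an induced copy of `H`
(a graph embedding) whose vertices receive pairwise distinct colors. -/
def ArrowsR {α β : Type} (G : SimpleGraph α) (H : SimpleGraph β) : Prop :=
  ∀ c : α → ℕ, (∀ u v : α, G.Adj u v → c u ≠ c v) →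
    ∃ f : H ↪g G, Function.Injective fun h => c (f h)

/-- `rho H` is the minimum number of vertices of a graph `G` with `G →r H`. -/
noncomputable def rho {β : Type} (H : SimpleGraph β) : ℕ :=
  sInf {m : ℕ | ∃ G : SimpleGraph (Fin m), ArrowsR G H}
/-- `G` together with `f : α → β` is a replication graph of `H`: every fiber of `f`
is a nonempty clique, and vertices in distinct fibers are adjacent in `G` iff their
images are adjacent in `H`. -/
def IsReplication {α β : Type} (G : SimpleGraph α) (H : SimpleGraph β) (f : α → β) : Prop :=
  Function.Surjective f ∧
    (∀ u v : α, u ≠ v → f u = f v → G.Adj u v) ∧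
    (∀ u v : α, f u ≠ f v → (G.Adj u v ↔ H.Adj (f u) (f v)))

/-- `G →R H` (for a replication graph `G` of `H` via `f`): every proper coloring of `G`
admits a section `s` of `f` whose image is rainbow (pairwise distinct colors), i.e. a
rainbow induced copy of `H` meeting each fiber exactly once. -/
def ArrowsRR {α β : Type} (G : SimpleGraph α) (H : SimpleGraph β) (f : α → β) : Prop :=
  ∀ c : α → ℕ, (∀ u v : α, G.Adj u v → c u ≠ c v) →
    ∃ s : β → α, (∀ h, f (s h) = h) ∧ Function.Injective fun h => c (s h)

/-- `rhoR H` is the minimum number of vertices of a replication graph `G` of `H`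
with `G →R H`. -/
noncomputable def rhoR {β : Type} (H : SimpleGraph β) : ℕ :=
  sInf {m : ℕ | ∃ (G : SimpleGraph (Fin m)) (f : Fin m → β),
    IsReplication G H f ∧ ArrowsRR G H f}


theorem exists_blowup {V : Type} [Fintype V] (H : SimpleGraph V) :
    ∃ m, ∃ (G : SimpleGraph (Fin m)) (f : Fin m → V),
      IsReplication G H f ∧ ArrowsRR G H f := by
  classical
  set n := Fintype.card V with hn
  have hcard : Fintype.card (Fin (n * n)) = Fintype.card (V × Fin n) := by
    simp [Fintype.card_prod, hn, mul_comm]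
  let e : Fin (n * n) ≃ V × Fin n := Fintype.equivOfCardEq hcard
  refine ⟨n * n,
    { Adj := fun a b => ((e a).1 = (e b).1 ∧ (e a).2 ≠ (e b).2) ∨ H.Adj (e a).1 (e b).1,
      symm := by
        constructor; rintro a b (⟨h1, h2⟩ | h)
        · exact Or.inl ⟨h1.symm, h2.symm⟩
        · exact Or.inr h.symm
      loopless := by
        constructor; rintro a (⟨h1, h2⟩ | h)
        · exact h2 rfl
        · exact H.loopless.irrefl _ h },
    fun a => (e a).1, ⟨?_, ?_, ?_⟩, ?_⟩
  · intro v
    have hpos : 0 < n := Fintype.card_pos_iff.mpr ⟨v⟩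
    exact ⟨e.symm (v, ⟨0, hpos⟩), by simp⟩
  · intro u v hne hfe
    refine Or.inl ⟨hfe, fun h => hne (e.injective ?_)⟩
    exact Prod.ext hfe h
  · intro u v hne
    constructor
    · rintro (⟨h1, _⟩ | h)
      · exact absurd h1 hne
      · exact h
    · exact Or.inr
  · intro c hc
    set t : V → Finset ℕ := fun v => Finset.univ.image (fun i : Fin n => c (e.symm (v, i)))
      with ht
    have hinj : ∀ v : V, Function.Injective (fun i : Fin n => c (e.symm (v, i))) := by
      intro v i j hij
      by_contra hne
      exact hc (e.symm (v, i)) (e.symm (v, j)) (Or.inl (by simp [hne])) hij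
    have hcardt : ∀ v, (t v).card = n := by
      intro v
      rw [ht]
      rw [Finset.card_image_of_injective _ (hinj v), Finset.card_univ, Fintype.card_fin]
    have hall : ∀ s : Finset V, s.card ≤ (s.biUnion t).card := by
      intro s
      rcases s.eq_empty_or_nonempty with rfl | ⟨v, hv⟩
      · simp
      · calc s.card ≤ Fintype.card V := Finset.card_le_univ s
          _ = (t v).card := (hcardt v).symm
          _ ≤ (s.biUnion t).card :=
            Finset.card_le_card (Finset.subset_biUnion_of_mem t hv)
    obtain ⟨g, hginj, hgmem⟩ := (Finset.all_card_le_biUnion_card_iff_exists_injective t).mp hall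
    have hmem : ∀ v, ∃ i : Fin n, c (e.symm (v, i)) = g v := by
      intro v
      obtain ⟨i, _, hi⟩ := Finset.mem_image.mp (hgmem v)
      exact ⟨i, hi⟩
    choose i hi using hmem
    refine ⟨fun v => e.symm (v, i v), fun v => by simp, ?_⟩
    intro a b hab
    apply hginj
    simpa [hi a, hi b] using hab

theorem mem_step {V : Type} {H' H : SimpleGraph V} (hle : H' ≤ H) {m : ℕ}
    (h : ∃ (G : SimpleGraph (Fin m)) (f : Fin m → V), IsReplication G H' f ∧ ArrowsRR G H' f) :
    ∃ (G : SimpleGraph (Fin m)) (f : Fin m → V), IsReplication G H f ∧ ArrowsRR G H f := by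
  classical
  obtain ⟨G', f, ⟨hsurj, hfib, hrep⟩, harr⟩ := h
  refine
    ⟨{ Adj := fun u v => u ≠ v ∧ (f u = f v ∨ H.Adj (f u) (f v)),
       symm := by
         constructor; rintro u v ⟨h1, h2⟩
         exact ⟨h1.symm, by rcases h2 with h | h; exacts [Or.inl h.symm, Or.inr h.symm]⟩
       loopless := by constructor; rintro u ⟨h1, _⟩; exact h1 rfl },
     f, ⟨hsurj, ?_, ?_⟩, ?_⟩
  · intro u v hne hfe
    exact ⟨hne, Or.inl hfe⟩
  · intro u v hne
    constructor
    · rintro ⟨_, h | h⟩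
      · exact absurd h hne
      · exact h
    · intro h
      exact ⟨fun huv => hne (congrArg f huv), Or.inr h⟩
  · intro c hc
    apply harr
    intro u v hadj
    apply hc
    refine ⟨G'.ne_of_adj hadj, ?_⟩
    by_cases hfe : f u = f v
    · exact Or.inl hfe
    · exact Or.inr (hle ((hrep u v hfe).mp hadj))

/-- If `H'` is a spanning subgraph of `H` (same vertices, fewer edges), then
`ρ_R(H') ≥ ρ_R(H)`. -/
theorem stmt14 {V : Type} [Fintype V] (H' H : SimpleGraph V) (hle : H' ≤ H) :
    rhoR H ≤ rhoR H' := by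
  classical
  have hne : {m : ℕ | ∃ (G : SimpleGraph (Fin m)) (f : Fin m → V),
      IsReplication G H' f ∧ ArrowsRR G H' f}.Nonempty := exists_blowup H'
  have hmem := Nat.sInf_mem hne
  exact Nat.sInf_le (mem_step hle hmem)
end

section
/- Let H be a finite simple graph whose vertex set is partitioned into the vertex sets of two disjoint induced subgraphs H_1 and H_2 (so that H consists of H_1, H_2 and possibly some edges between them), and let m(H_1,H_2) be the number of non-adjacent pairs (u,v) with u ∈ V(H_1), v ∈ V(H_2). Then ρ_R(H_1) + ρ_R(H_2) ≤ ρ_R(H) ≤ ρ_R(H_1) + ρ_R(H_2) + m(H_1,H_2). -/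
lemma card_mem_rhoRSet {β : Type} (H : SimpleGraph β) {α : Type} [Fintype α]
    (G : SimpleGraph α) (f : α → β) (h1 : IsReplication G H f) (h2 : ArrowsRR G H f) :
    Fintype.card α ∈ {m : ℕ | ∃ (G : SimpleGraph (Fin m)) (f : Fin m → β),
      IsReplication G H f ∧ ArrowsRR G H f} := by
  obtain ⟨e⟩ : Nonempty (Fin (Fintype.card α) ≃ α) := ⟨(Fintype.equivFin α).symm⟩
  refine ⟨G.comap e, f ∘ e, ⟨?_, ?_, ?_⟩, ?_⟩
  · intro b
    obtain ⟨a, ha⟩ := h1.1 b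
    exact ⟨e.symm a, by simp [ha]⟩
  · intro u v huv hfe
    exact h1.2.1 (e u) (e v) (fun h => huv (e.injective h)) hfe
  · intro u v h
    exact h1.2.2 (e u) (e v) h
  · intro c hc
    obtain ⟨s, hs1, hs2⟩ := h2 (c ∘ e.symm) (fun u v huv => by
      simpa using hc (e.symm u) (e.symm v) (by simpa using huv))
    refine ⟨fun h => e.symm (s h), fun h => by simpa using hs1 h, fun h h' hh => hs2 ?_⟩
    simpa using hh

lemma rhoRSet_nonempty {β : Type} [Fintype β] (H : SimpleGraph β) :
    {m : ℕ | ∃ (G : SimpleGraph (Fin m)) (f : Fin m → β),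
      IsReplication G H f ∧ ArrowsRR G H f}.Nonempty := by
  classical
  set n := Fintype.card β with hn
  set α := β × Fin (n + 1) with hα
  set G : SimpleGraph α :=
    { Adj := fun p q => p ≠ q ∧ (p.1 = q.1 ∨ H.Adj p.1 q.1)
      symm := ⟨fun p q h => ⟨h.1.symm, h.2.imp Eq.symm (fun hh => H.adj_symm hh)⟩⟩
      loopless := ⟨fun p h => h.1 rfl⟩ } with hG
  have hrep : IsReplication G H Prod.fst := by
    refine ⟨fun b => ⟨(b, 0), rfl⟩, fun p q hne hfe => ⟨hne, Or.inl hfe⟩, fun p q hne => ?_⟩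
    constructor
    · rintro ⟨h1, (h2 | h2)⟩
      · exact absurd h2 hne
      · exact h2
    · intro h
      exact ⟨fun e => hne (by rw [e]), Or.inr h⟩
  refine ⟨Fintype.card α, card_mem_rhoRSet H G Prod.fst hrep ?_⟩
  intro c hc
  -- greedy construction
  have key : ∀ S : Finset β, ∃ s : β → α, (∀ h, (s h).1 = h) ∧
      Set.InjOn (fun h => c (s h)) ↑S := by
    intro S
    induction S using Finset.induction_on with
    | empty => exact ⟨fun h => (h, 0), fun _ => rfl, by simp⟩
    | @insert a S ha ih =>
      obtain ⟨s, hs1, hs2⟩ := ih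
      have hinj : Function.Injective fun i : Fin (n + 1) => c (a, i) := by
        intro i j hij
        by_contra hne
        exact hc (a, i) (a, j) ⟨fun e => hne (congrArg Prod.snd e), Or.inl rfl⟩ hij
      obtain ⟨i, hi⟩ : ∃ i : Fin (n + 1), c (a, i) ∉ S.image (fun h => c (s h)) := by
        by_contra hcon
        push_neg at hcon
        have hsub : (Finset.univ.image fun i : Fin (n + 1) => c (a, i)) ⊆
            S.image (fun h => c (s h)) := by
          intro x hx
          obtain ⟨i, _, rfl⟩ := Finset.mem_image.1 hx
          exact hcon i
        have h1 : n + 1 ≤ (S.image fun h => c (s h)).card := by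
          have := Finset.card_le_card hsub
          rwa [Finset.card_image_of_injective _ hinj, Finset.card_univ, Fintype.card_fin] at this
        have h2 : (S.image fun h => c (s h)).card ≤ n := by
          calc (S.image fun h => c (s h)).card ≤ S.card := Finset.card_image_le
            _ ≤ n := by simpa [hn] using Finset.card_le_univ S
        omega
      refine ⟨Function.update s a (a, i), fun h => ?_, ?_⟩
      · by_cases hh : h = a
        · subst hh; simp
        · simp [Function.update_of_ne hh, hs1]
      · intro x hx y hy hxy
        simp only [Finset.coe_insert, Set.mem_insert_iff, Finset.mem_coe] at hx hy
        have hupd : ∀ h ∈ S, Function.update s a (a, i) h = s h := by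
          intro h hh
          apply Function.update_of_ne
          rintro rfl; exact ha hh
        simp only at hxy
        rcases hx with rfl | hx <;> rcases hy with rfl | hy
        · rfl
        · exfalso
          rw [Function.update_self, hupd y hy] at hxy
          exact hi (Finset.mem_image.2 ⟨y, hy, hxy.symm⟩)
        · exfalso
          rw [Function.update_self, hupd x hx] at hxy
          exact hi (Finset.mem_image.2 ⟨x, hx, hxy⟩)
        · rw [hupd x hx, hupd y hy] at hxy
          exact hs2 hx hy hxy
  obtain ⟨s, hs1, hs2⟩ := key Finset.univ
  exact ⟨s, hs1, fun x y hxy => hs2 (by simp) (by simp) hxy⟩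

lemma rhoR_restrict_le {β β' : Type} {M : ℕ} (H : SimpleGraph β) (H' : SimpleGraph β')
    (ι : β' → β) (hι : Function.Injective ι)
    (hadj : ∀ a b, H'.Adj a b ↔ H.Adj (ι a) (ι b))
    (G : SimpleGraph (Fin M)) (f : Fin M → β)
    (h1 : IsReplication G H f) (h2 : ArrowsRR G H f)
    [inst : Fintype {x : Fin M // ∃ a, f x = ι a}] :
    rhoR H' ≤ Nat.card {x : Fin M // ∃ a, f x = ι a} := by
  classical
  set α := {x : Fin M // ∃ a, f x = ι a} with hαdef
  set G' : SimpleGraph α := G.comap Subtype.val with hG'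
  set f' : α → β' := fun x => Classical.choose x.2 with hf'
  have hspec : ∀ x : α, f x.1 = ι (f' x) := fun x => Classical.choose_spec x.2
  have hrep : IsReplication G' H' f' := by
    refine ⟨?_, ?_, ?_⟩
    · intro b
      obtain ⟨x, hx⟩ := h1.1 (ι b)
      refine ⟨⟨x, b, hx⟩, hι ?_⟩
      rw [← hspec ⟨x, b, hx⟩, hx]
    · intro u v huv hfe
      have : f u.1 = f v.1 := by rw [hspec u, hspec v, hfe]
      exact h1.2.1 u.1 v.1 (fun e => huv (Subtype.ext e)) this
    · intro u v huv
      have hne : f u.1 ≠ f v.1 := by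
        rw [hspec u, hspec v]
        exact fun e => huv (hι e)
      have := h1.2.2 u.1 v.1 hne
      rw [hspec u, hspec v] at this
      exact this.trans (hadj (f' u) (f' v)).symm
  have harr : ArrowsRR G' H' f' := by
    intro c₁ hc₁
    set c : Fin M → ℕ := fun x =>
      if h : ∃ a, f x = ι a then 2 * c₁ ⟨x, h⟩ else 2 * (x : ℕ) + 1 with hcdef
    have hc : ∀ u v : Fin M, G.Adj u v → c u ≠ c v := by
      intro u v huv
      by_cases hu : ∃ a, f u = ι a <;> by_cases hv : ∃ a, f v = ι a
      · have := hc₁ ⟨u, hu⟩ ⟨v, hv⟩ huv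
        simp only [hcdef, dif_pos hu, dif_pos hv]
        omega
      · simp only [hcdef, dif_pos hu, dif_neg hv]; omega
      · simp only [hcdef, dif_neg hu, dif_pos hv]; omega
      · simp only [hcdef, dif_neg hu, dif_neg hv]
        have : u ≠ v := G.ne_of_adj huv
        intro e
        exact this (Fin.ext (by omega))
    obtain ⟨s, hs1, hs2⟩ := h2 c hc
    have hmem : ∀ b : β', ∃ a, f (s (ι b)) = ι a := fun b => ⟨b, hs1 (ι b)⟩
    refine ⟨fun b => ⟨s (ι b), hmem b⟩, fun b => ?_, fun b b' hbb => ?_⟩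
    · apply hι
      rw [← hspec ⟨s (ι b), hmem b⟩, hs1 (ι b)]
    · simp only at hbb
      have : c (s (ι b)) = c (s (ι b')) := by
        simp only [hcdef, dif_pos (hmem b), dif_pos (hmem b')]
        omega
      exact hι (hs2 this)
  have h := Nat.sInf_le (@card_mem_rhoRSet β' H' α inst G' f' hrep harr)
  rw [Nat.card_eq_fintype_card (α := α)]
  convert h using 2
  rfl

section Glue

variable {V₁ V₂ : Type} (H : SimpleGraph (V₁ ⊕ V₂)) {M₁ M₂ : ℕ}
  (f₁ : Fin M₁ → V₁) (f₂ : Fin M₂ → V₂)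

def EX : Type := {p : V₁ × V₂ // ¬ H.Adj (Sum.inl p.1) (Sum.inr p.2)}

def FL : Fin M₁ ⊕ EX H → V₁ := Sum.elim f₁ (fun p => p.1.1)

def FF : (Fin M₁ ⊕ EX H) ⊕ Fin M₂ → V₁ ⊕ V₂ :=
  Sum.elim (fun z => Sum.inl (FL H f₁ z)) (fun y => Sum.inr (f₂ y))

def GG : SimpleGraph ((Fin M₁ ⊕ EX H) ⊕ Fin M₂) where
  Adj a b := a ≠ b ∧ (FF H f₁ f₂ a = FF H f₁ f₂ b ∨ H.Adj (FF H f₁ f₂ a) (FF H f₁ f₂ b))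
  symm := ⟨fun a b h => ⟨h.1.symm, h.2.imp Eq.symm (fun hh => H.adj_symm hh)⟩⟩
  loopless := ⟨fun a h => h.1 rfl⟩

lemma glue_rep (hs₁ : Function.Surjective f₁) (hs₂ : Function.Surjective f₂) :
    IsReplication (GG H f₁ f₂) H (FF H f₁ f₂) := by
  refine ⟨?_, fun a b hne hfe => ⟨hne, Or.inl hfe⟩, fun a b hne => ?_⟩
  · rintro (u | v)
    · obtain ⟨x, hx⟩ := hs₁ u
      exact ⟨Sum.inl (Sum.inl x), by show Sum.inl (f₁ x) = Sum.inl u; rw [hx]⟩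
    · obtain ⟨y, hy⟩ := hs₂ v
      exact ⟨Sum.inr y, by show Sum.inr (f₂ y) = Sum.inr v; rw [hy]⟩
  · constructor
    · rintro ⟨h1, h2 | h2⟩
      · exact absurd h2 hne
      · exact h2
    · intro h
      exact ⟨fun e => hne (by rw [e]), Or.inr h⟩

lemma glue_arrows [Fintype V₁] [Fintype V₂]
    (H₁ : SimpleGraph V₁) (H₂ : SimpleGraph V₂)
    (hH₁ : ∀ a b : V₁, H₁.Adj a b ↔ H.Adj (Sum.inl a) (Sum.inl b))
    (hH₂ : ∀ a b : V₂, H₂.Adj a b ↔ H.Adj (Sum.inr a) (Sum.inr b))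
    (G₁ : SimpleGraph (Fin M₁)) (G₂ : SimpleGraph (Fin M₂))
    (rep₁ : IsReplication G₁ H₁ f₁) (arr₁ : ArrowsRR G₁ H₁ f₁)
    (rep₂ : IsReplication G₂ H₂ f₂) (arr₂ : ArrowsRR G₂ H₂ f₂) :
    ArrowsRR (GG H f₁ f₂) H (FF H f₁ f₂) := by
  classical
  intro c hc
  -- step 1 : rainbow section on the right part
  have hc₂ : ∀ y y' : Fin M₂, G₂.Adj y y' → c (Sum.inr y) ≠ c (Sum.inr y') := by
    intro y y' hadj
    apply hc
    refine ⟨fun e => G₂.ne_of_adj hadj (Sum.inr.inj e), ?_⟩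
    by_cases hf : f₂ y = f₂ y'
    · exact Or.inl (by show Sum.inr (f₂ y) = Sum.inr (f₂ y'); rw [hf])
    · refine Or.inr ?_
      have h2 : H₂.Adj (f₂ y) (f₂ y') := ((rep₂.2.2 y y' hf).1 hadj)
      exact (hH₂ _ _).1 h2
  obtain ⟨s₂, hs₂, hs₂inj⟩ := arr₂ (fun y => c (Sum.inr y)) hc₂
  -- colors are pairwise distinct within each left fiber
  have hdist : ∀ (u : V₁) (z z' : Fin M₁ ⊕ EX H), FL H f₁ z = u → FL H f₁ z' = u →
      c (Sum.inl z) = c (Sum.inl z') → z = z' := by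
    intro u z z' hz hz' hcc
    by_contra hne
    refine hc (Sum.inl z) (Sum.inl z') ⟨fun e => hne (Sum.inl.inj e), Or.inl ?_⟩ hcc
    show Sum.inl (FL H f₁ z) = Sum.inl (FL H f₁ z')
    rw [hz, hz']
  -- per-fiber good injections
  have key : ∀ u : V₁, ∃ g : Fin M₁ → Fin M₁ ⊕ EX H,
      (∀ x, f₁ x = u → FL H f₁ (g x) = u ∧
        (∀ v : V₂, ¬ H.Adj (Sum.inl u) (Sum.inr v) →
          c (Sum.inl (g x)) ≠ c (Sum.inr (s₂ v)))) ∧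
      (∀ x y, f₁ x = u → f₁ y = u → g x = g y → x = y) := by
    intro u
    set T := {z : Fin M₁ ⊕ EX H // FL H f₁ z = u} with hT
    set q : T → Prop := fun w => ∀ v : V₂, ¬ H.Adj (Sum.inl u) (Sum.inr v) →
      c (Sum.inl w.1) ≠ c (Sum.inr (s₂ v)) with hq
    haveI : Fintype (EX H) := Subtype.fintype _
    haveI : Fintype T := Subtype.fintype _
    haveI : Fintype {w : T // q w} := Subtype.fintype _
    haveI : Fintype {w : T // ¬ q w} := Subtype.fintype _
    have e1 : T ≃ {x : Fin M₁ // f₁ x = u} ⊕ {p : EX H // p.1.1 = u} :=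
      { toFun := fun w => match w with
          | ⟨Sum.inl x, h⟩ => Sum.inl ⟨x, h⟩
          | ⟨Sum.inr p, h⟩ => Sum.inr ⟨p, h⟩
        invFun := Sum.elim (fun w => ⟨Sum.inl w.1, w.2⟩) (fun w => ⟨Sum.inr w.1, w.2⟩)
        left_inv := by rintro ⟨z | z, h⟩ <;> rfl
        right_inv := by rintro (w | w) <;> rfl }
    have e2 : {p : EX H // p.1.1 = u} ≃ {v : V₂ // ¬ H.Adj (Sum.inl u) (Sum.inr v)} :=
      { toFun := fun w => ⟨w.1.1.2, by have h2 := w.1.2; rw [w.2] at h2; exact h2⟩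
        invFun := fun v => ⟨⟨(u, v.1), v.2⟩, rfl⟩
        left_inv := by rintro ⟨⟨⟨a, b⟩, hp⟩, h⟩; subst h; rfl
        right_inv := by rintro ⟨v, hv⟩; rfl }
    have hcT : Fintype.card T =
        Fintype.card {x : Fin M₁ // f₁ x = u} +
          Fintype.card {v : V₂ // ¬ H.Adj (Sum.inl u) (Sum.inr v)} := by
      rw [Fintype.card_congr e1, Fintype.card_sum, Fintype.card_congr e2]
    have hbad : Fintype.card {w : T // ¬ q w} ≤
        Fintype.card {v : V₂ // ¬ H.Adj (Sum.inl u) (Sum.inr v)} := by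
      have hex : ∀ w : {w : T // ¬ q w}, ∃ v : V₂,
          ¬ H.Adj (Sum.inl u) (Sum.inr v) ∧ c (Sum.inl w.1.1) = c (Sum.inr (s₂ v)) := by
        intro w
        have h2 := w.2
        simp only [hq] at h2
        push_neg at h2
        obtain ⟨v, hv1, hv2⟩ := h2
        exact ⟨v, hv1, hv2⟩
      choose φ hφ1 hφ2 using hex
      have hinj : Function.Injective
          (fun w => (⟨φ w, hφ1 w⟩ : {v : V₂ // ¬ H.Adj (Sum.inl u) (Sum.inr v)})) := by
        intro w w' hww
        have hv : φ w = φ w' := congrArg Subtype.val hww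
        have hcw : c (Sum.inl w.1.1) = c (Sum.inl w'.1.1) := by rw [hφ2 w, hφ2 w', hv]
        exact Subtype.ext (Subtype.ext (hdist u w.1.1 w'.1.1 w.1.2 w'.1.2 hcw))
      exact Fintype.card_le_of_injective _ hinj
    have hpart : Fintype.card {w : T // q w} + Fintype.card {w : T // ¬ q w} =
        Fintype.card T := by
      rw [← Fintype.card_sum]
      exact Fintype.card_congr (Equiv.sumCompl q)
    have hOgood : Fintype.card {x : Fin M₁ // f₁ x = u} ≤
        Fintype.card {w : T // q w} := by omega
    obtain ⟨emb⟩ := Function.Embedding.nonempty_of_card_le hOgood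
    refine ⟨fun x => if h : f₁ x = u then (emb ⟨x, h⟩).1.1 else Sum.inl x, ?_, ?_⟩
    · intro x hx
      refine ⟨?_, ?_⟩
      · dsimp only; rw [dif_pos hx]; exact (emb ⟨x, hx⟩).1.2
      · intro v hv
        dsimp only
        rw [dif_pos hx]
        exact (emb ⟨x, hx⟩).2 v hv
    · intro x y hx hy hxy
      dsimp only at hxy
      rw [dif_pos hx, dif_pos hy] at hxy
      have h3 : emb ⟨x, hx⟩ = emb ⟨y, hy⟩ := Subtype.ext (Subtype.ext hxy)
      exact congrArg Subtype.val (emb.injective h3)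
  choose gf hg1 hg2 using key
  set ψ : Fin M₁ → Fin M₁ ⊕ EX H := fun x => gf (f₁ x) x with hψ
  have pa : ∀ x, FL H f₁ (ψ x) = f₁ x := fun x => (hg1 (f₁ x) x rfl).1
  have pb : ∀ x v, ¬ H.Adj (Sum.inl (f₁ x)) (Sum.inr v) →
      c (Sum.inl (ψ x)) ≠ c (Sum.inr (s₂ v)) := fun x => (hg1 (f₁ x) x rfl).2
  have pc : ∀ x y, f₁ x = f₁ y → ψ x = ψ y → x = y := by
    intro x y h hxy
    have h2 : ψ y = gf (f₁ x) y := by show gf (f₁ y) y = gf (f₁ x) y; rw [h]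
    exact hg2 (f₁ x) x y rfl h.symm (by rw [← h2]; exact hxy)
  -- the recoloring is proper on G₁
  have hc₁ : ∀ x y : Fin M₁, G₁.Adj x y → c (Sum.inl (ψ x)) ≠ c (Sum.inl (ψ y)) := by
    intro x y hadj
    have hxy : x ≠ y := G₁.ne_of_adj hadj
    apply hc
    by_cases hf : f₁ x = f₁ y
    · refine ⟨fun e => hxy (pc x y hf (Sum.inl.inj e)), Or.inl ?_⟩
      show Sum.inl (FL H f₁ (ψ x)) = Sum.inl (FL H f₁ (ψ y))
      rw [pa, pa, hf]
    · have hne : ψ x ≠ ψ y := fun e => hf (by rw [← pa x, ← pa y, e])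
      have hH : H.Adj (Sum.inl (f₁ x)) (Sum.inl (f₁ y)) := (hH₁ _ _).1 ((rep₁.2.2 x y hf).1 hadj)
      refine ⟨fun e => hne (Sum.inl.inj e), Or.inr ?_⟩
      show H.Adj (Sum.inl (FL H f₁ (ψ x))) (Sum.inl (FL H f₁ (ψ y)))
      rw [pa, pa]; exact hH
  obtain ⟨s₁, hs₁, hs₁inj⟩ := arr₁ (fun x => c (Sum.inl (ψ x))) hc₁
  -- assemble the section
  refine ⟨Sum.elim (fun u => Sum.inl (ψ (s₁ u))) (fun v => Sum.inr (s₂ v)), ?_, ?_⟩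
  · rintro (u | v)
    · show Sum.inl (FL H f₁ (ψ (s₁ u))) = Sum.inl u
      rw [pa, hs₁]
    · show Sum.inr (f₂ (s₂ v)) = Sum.inr v
      rw [hs₂]
  · have cross : ∀ (u : V₁) (v : V₂), c (Sum.inl (ψ (s₁ u))) ≠ c (Sum.inr (s₂ v)) := by
      intro u v
      by_cases hA : H.Adj (Sum.inl u) (Sum.inr v)
      · apply hc
        refine ⟨fun e => Sum.inl_ne_inr e, Or.inr ?_⟩
        show H.Adj (Sum.inl (FL H f₁ (ψ (s₁ u)))) (Sum.inr (f₂ (s₂ v)))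
        rw [pa, hs₁, hs₂]; exact hA
      · exact pb (s₁ u) v (by rw [hs₁]; exact hA)
    intro h h'
    match h, h' with
    | Sum.inl u, Sum.inl u' =>
      intro hh
      exact congrArg Sum.inl (hs₁inj hh)
    | Sum.inl u, Sum.inr v =>
      intro hh
      exact absurd hh (cross u v)
    | Sum.inr v, Sum.inl u =>
      intro hh
      exact absurd hh.symm (cross u v)
    | Sum.inr v, Sum.inr v' =>
      intro hh
      exact congrArg Sum.inr (hs₂inj hh)

end Glue

/-- If `H` on `V₁ ⊕ V₂` induces `H₁` on `V₁` and `H₂` on `V₂`, and `m` is the number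
of non-adjacent pairs `(u, v)` with `u ∈ V₁`, `v ∈ V₂`, then
`ρ_R(H₁) + ρ_R(H₂) ≤ ρ_R(H) ≤ ρ_R(H₁) + ρ_R(H₂) + m`. -/
theorem stmt15 {V₁ V₂ : Type} [Fintype V₁] [Fintype V₂]
    (H : SimpleGraph (V₁ ⊕ V₂)) [DecidableRel H.Adj]
    (H₁ : SimpleGraph V₁) (H₂ : SimpleGraph V₂)
    (hH₁ : ∀ a b : V₁, H₁.Adj a b ↔ H.Adj (Sum.inl a) (Sum.inl b))
    (hH₂ : ∀ a b : V₂, H₂.Adj a b ↔ H.Adj (Sum.inr a) (Sum.inr b))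
    (m : ℕ)
    (hm : m = (Finset.univ.filter
      fun p : V₁ × V₂ => ¬ H.Adj (Sum.inl p.1) (Sum.inr p.2)).card) :
    rhoR H₁ + rhoR H₂ ≤ rhoR H ∧ rhoR H ≤ rhoR H₁ + rhoR H₂ + m := by
  classical
  constructor
  · -- lower bound
    have hmem : rhoR H ∈ {m : ℕ | ∃ (G : SimpleGraph (Fin m)) (f : Fin m → V₁ ⊕ V₂),
        IsReplication G H f ∧ ArrowsRR G H f} := Nat.sInf_mem (rhoRSet_nonempty H)
    obtain ⟨G, f, h1, h2⟩ := hmem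
    have le1 := rhoR_restrict_le H H₁ Sum.inl Sum.inl_injective hH₁ G f h1 h2
    have le2 := rhoR_restrict_le H H₂ Sum.inr Sum.inr_injective hH₂ G f h1 h2
    have hcompl : ∀ x : Fin (rhoR H), (∃ a, f x = Sum.inr a) ↔ ¬ (∃ a, f x = Sum.inl a) := by
      intro x
      cases hfx : f x with
      | inl a => simp [hfx]
      | inr b => simp [hfx]
    have c1 : Nat.card {x : Fin (rhoR H) // ∃ a, f x = Sum.inl a} =
        Fintype.card {x : Fin (rhoR H) // ∃ a, f x = Sum.inl a} := Nat.card_eq_fintype_card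
    have c2 : Nat.card {x : Fin (rhoR H) // ∃ a, f x = Sum.inr a} =
        Fintype.card {x : Fin (rhoR H) // ¬ ∃ a, f x = Sum.inl a} := by
      rw [Nat.card_congr (Equiv.subtypeEquivRight hcompl), Nat.card_eq_fintype_card]
    have c3 : Fintype.card {x : Fin (rhoR H) // ¬ ∃ a, f x = Sum.inl a} =
        rhoR H - Fintype.card {x : Fin (rhoR H) // ∃ a, f x = Sum.inl a} := by
      rw [Fintype.card_subtype_compl, Fintype.card_fin]
    have c4 : Fintype.card {x : Fin (rhoR H) // ∃ a, f x = Sum.inl a} ≤ rhoR H := by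
      have := Fintype.card_le_of_injective
        (Subtype.val : {x : Fin (rhoR H) // ∃ a, f x = Sum.inl a} → Fin (rhoR H))
        Subtype.val_injective
      simpa using this
    omega
  · -- upper bound
    have hmem₁ : rhoR H₁ ∈ {m : ℕ | ∃ (G : SimpleGraph (Fin m)) (f : Fin m → V₁),
        IsReplication G H₁ f ∧ ArrowsRR G H₁ f} := Nat.sInf_mem (rhoRSet_nonempty H₁)
    have hmem₂ : rhoR H₂ ∈ {m : ℕ | ∃ (G : SimpleGraph (Fin m)) (f : Fin m → V₂),
        IsReplication G H₂ f ∧ ArrowsRR G H₂ f} := Nat.sInf_mem (rhoRSet_nonempty H₂)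
    obtain ⟨G₁, f₁, rep₁, arr₁⟩ := hmem₁
    obtain ⟨G₂, f₂, rep₂, arr₂⟩ := hmem₂
    haveI : Fintype (EX H) := Subtype.fintype _
    have repG := glue_rep H f₁ f₂ rep₁.1 rep₂.1
    have arrG := glue_arrows H f₁ f₂ H₁ H₂ hH₁ hH₂ G₁ G₂ rep₁ arr₁ rep₂ arr₂
    have hle : rhoR H ≤ Fintype.card ((Fin (rhoR H₁) ⊕ EX H) ⊕ Fin (rhoR H₂)) :=
      Nat.sInf_le (card_mem_rhoRSet H (GG H f₁ f₂) (FF H f₁ f₂) repG arrG)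
    have hEX : Fintype.card (EX H) = m := by
      have h0 : Fintype.card (EX H) =
          Fintype.card {p : V₁ × V₂ // ¬ H.Adj (Sum.inl p.1) (Sum.inr p.2)} := by
        apply Fintype.card_congr
        exact Equiv.refl _
      rw [h0, Fintype.card_subtype, hm]
    have hcard : Fintype.card ((Fin (rhoR H₁) ⊕ EX H) ⊕ Fin (rhoR H₂)) =
        rhoR H₁ + Fintype.card (EX H) + rhoR H₂ := by
      simp [Fintype.card_sum, Fintype.card_fin]
    omega
end

section
/- For any finite simple graphs H_1 and H_2, the join H_1 + H_2 (disjoint union of H_1 and H_2 together with all edges between V(H_1) and V(H_2)) satisfies ρ_R(H_1 + H_2) = ρ_R(H_1) + ρ_R(H_2). -/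
/-- The join of `H₁` and `H₂`: disjoint union plus all edges between the two parts. -/
def graphJoin {V₁ V₂ : Type} (H₁ : SimpleGraph V₁) (H₂ : SimpleGraph V₂) :
    SimpleGraph (V₁ ⊕ V₂) where
  Adj x y := match x, y with
    | Sum.inl a, Sum.inl b => H₁.Adj a b
    | Sum.inr a, Sum.inr b => H₂.Adj a b
    | Sum.inl _, Sum.inr _ => True
    | Sum.inr _, Sum.inl _ => True
  symm := by
    constructor
    rintro (a | a) (b | b) h
    · exact h.symm
    · trivial
    · trivial
    · exact h.symm
  loopless := by
    constructor
    rintro (a | a) h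
    · exact H₁.irrefl h
    · exact H₂.irrefl h

/-- Transport a replication-plus-arrows pair along an equivalence of vertex types. -/
lemma transportRep {α α' β : Type} (e : α ≃ α') (G : SimpleGraph α) (H : SimpleGraph β)
    (f : α → β) (hrep : IsReplication G H f) (harr : ArrowsRR G H f) :
    ∃ (G' : SimpleGraph α') (f' : α' → β), IsReplication G' H f' ∧ ArrowsRR G' H f' := by
  refine ⟨⟨fun x y => G.Adj (e.symm x) (e.symm y), ⟨fun x y (h : G.Adj (e.symm x) (e.symm y)) => h.symm⟩,
      ⟨fun x (h : G.Adj (e.symm x) (e.symm x)) => G.irrefl h⟩⟩, f ∘ e.symm, ⟨hrep.1.comp e.symm.surjective, ?_, ?_⟩, ?_⟩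
  · intro u v huv hf
    exact hrep.2.1 _ _ (fun h => huv (by simpa using congrArg e h)) hf
  · intro u v hf
    exact hrep.2.2 _ _ hf
  · intro c hc
    obtain ⟨s, hs1, hs2⟩ := harr (c ∘ e) (fun u v huv => hc (e u) (e v) (by simpa using huv))
    refine ⟨fun h => e (s h), fun h => ?_, ?_⟩
    · simpa using hs1 h
    · simpa using hs2

/-- Every finite graph has a replication graph arrowing it (a blow-up by cliques
of size `|V(H)|`, via Hall's marriage theorem). -/
lemma existsRep {β : Type} [Fintype β] (H : SimpleGraph β) :
    ∃ m, ∃ G : SimpleGraph (Fin m), ∃ f : Fin m → β,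
      IsReplication G H f ∧ ArrowsRR G H f := by
  classical
  set n := Fintype.card β with hn
  set B : SimpleGraph (β × Fin n) :=
    { Adj := fun a b => a ≠ b ∧ (a.1 = b.1 ∨ H.Adj a.1 b.1),
      symm := ⟨fun a b (h : a ≠ b ∧ (a.1 = b.1 ∨ H.Adj a.1 b.1)) =>
        ⟨h.1.symm, h.2.imp Eq.symm SimpleGraph.Adj.symm⟩⟩,
      loopless := ⟨fun a (h : a ≠ a ∧ (a.1 = a.1 ∨ H.Adj a.1 a.1)) => h.1 rfl⟩ } with hB
  have hrep : IsReplication B H Prod.fst := by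
    refine ⟨?_, ?_, ?_⟩
    · intro b
      have hpos : 0 < n := Fintype.card_pos_iff.mpr ⟨b⟩
      exact ⟨(b, ⟨0, hpos⟩), rfl⟩
    · exact fun u v h hf => ⟨h, Or.inl hf⟩
    · intro u v hf
      exact ⟨fun h => h.2.resolve_left hf,
        fun h => ⟨fun he => hf (congrArg Prod.fst he), Or.inr h⟩⟩
  have harr : ArrowsRR B H Prod.fst := by
    intro c hc
    have hfib : ∀ h : β, Function.Injective fun i : Fin n => c (h, i) := by
      intro h i j heq
      by_contra hne
      exact hc (h, i) (h, j) ⟨fun e => hne (by simpa using e), Or.inl rfl⟩ heq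
    set t : β → Finset ℕ := fun h => Finset.univ.image fun i : Fin n => c (h, i) with ht
    have hcard : ∀ h, (t h).card = n := by
      intro h
      rw [ht]
      rw [Finset.card_image_of_injective _ (hfib h), Finset.card_univ, Fintype.card_fin]
    have hall : ∀ s : Finset β, s.card ≤ (s.biUnion t).card := by
      intro s
      rcases s.eq_empty_or_nonempty with rfl | ⟨h, hh⟩
      · simp
      · calc s.card ≤ Fintype.card β := Finset.card_le_univ s
          _ = (t h).card := by rw [hcard h, hn]
          _ ≤ (s.biUnion t).card :=
            Finset.card_le_card (Finset.subset_biUnion_of_mem t hh)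
    obtain ⟨g, hg_inj, hg_mem⟩ :=
      (Finset.all_card_le_biUnion_card_iff_exists_injective t).mp hall
    have hex : ∀ h : β, ∃ i : Fin n, c (h, i) = g h := by
      intro h
      have := hg_mem h
      rw [ht] at this
      obtain ⟨i, _, hi⟩ := Finset.mem_image.mp this
      exact ⟨i, hi⟩
    choose idx hidx using hex
    refine ⟨fun h => (h, idx h), fun h => rfl, ?_⟩
    have hfun : (fun h => c (h, idx h)) = g := funext hidx
    exact hfun ▸ hg_inj
  obtain ⟨G', f', h1, h2⟩ :=
    transportRep (Fintype.equivFin (β × Fin n)) B H Prod.fst hrep harr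
  exact ⟨_, G', f', h1, h2⟩

/-- Joining two replication graphs gives a replication graph of the join. -/
lemma joinRep {α₁ α₂ V₁ V₂ : Type} {G₁ : SimpleGraph α₁} {G₂ : SimpleGraph α₂}
    {H₁ : SimpleGraph V₁} {H₂ : SimpleGraph V₂} {f₁ : α₁ → V₁} {f₂ : α₂ → V₂}
    (hr₁ : IsReplication G₁ H₁ f₁) (ha₁ : ArrowsRR G₁ H₁ f₁)
    (hr₂ : IsReplication G₂ H₂ f₂) (ha₂ : ArrowsRR G₂ H₂ f₂) :
    IsReplication (graphJoin G₁ G₂) (graphJoin H₁ H₂) (Sum.map f₁ f₂) ∧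
      ArrowsRR (graphJoin G₁ G₂) (graphJoin H₁ H₂) (Sum.map f₁ f₂) := by
  constructor
  · refine ⟨?_, ?_, ?_⟩
    · rintro (a | b)
      · obtain ⟨x, hx⟩ := hr₁.1 a
        exact ⟨Sum.inl x, by simp [hx]⟩
      · obtain ⟨x, hx⟩ := hr₂.1 b
        exact ⟨Sum.inr x, by simp [hx]⟩
    · rintro (u | u) (v | v) hne hf
      · exact hr₁.2.1 u v (fun e => hne (congrArg Sum.inl e)) (by simpa using hf)
      · simp at hf
      · simp at hf
      · exact hr₂.2.1 u v (fun e => hne (congrArg Sum.inr e)) (by simpa using hf)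
    · rintro (u | u) (v | v) hne
      · exact hr₁.2.2 u v (fun e => hne (by simp [e]))
      · exact Iff.rfl
      · exact Iff.rfl
      · exact hr₂.2.2 u v (fun e => hne (by simp [e]))
  · intro c hc
    obtain ⟨s₁, hs₁, hinj₁⟩ := ha₁ (fun a => c (Sum.inl a))
      (fun u v h => hc (Sum.inl u) (Sum.inl v) h)
    obtain ⟨s₂, hs₂, hinj₂⟩ := ha₂ (fun a => c (Sum.inr a))
      (fun u v h => hc (Sum.inr u) (Sum.inr v) h)
    refine ⟨Sum.elim (Sum.inl ∘ s₁) (Sum.inr ∘ s₂), ?_, ?_⟩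
    · rintro (h | h)
      · simp [hs₁ h]
      · simp [hs₂ h]
    · rintro (a | a) (b | b) hab
      · exact congrArg Sum.inl (hinj₁ hab)
      · exact absurd hab (hc _ _ trivial)
      · exact absurd hab (hc _ _ trivial)
      · exact congrArg Sum.inr (hinj₂ hab)

/-- Swap the two sides of a join replication. -/
lemma swapRep {α V₁ V₂ : Type} {G : SimpleGraph α} {H₁ : SimpleGraph V₁}
    {H₂ : SimpleGraph V₂} {f : α → V₁ ⊕ V₂}
    (hr : IsReplication G (graphJoin H₁ H₂) f) (ha : ArrowsRR G (graphJoin H₁ H₂) f) :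
    IsReplication G (graphJoin H₂ H₁) (Sum.swap ∘ f) ∧
      ArrowsRR G (graphJoin H₂ H₁) (Sum.swap ∘ f) := by
  have key : ∀ x y : V₁ ⊕ V₂,
      (graphJoin H₂ H₁).Adj x.swap y.swap ↔ (graphJoin H₁ H₂).Adj x y := by
    rintro (a | a) (b | b) <;> exact Iff.rfl
  constructor
  · refine ⟨(Function.RightInverse.surjective Sum.swap_rightInverse).comp hr.1, ?_, ?_⟩
    · intro u v hne hf
      exact hr.2.1 u v hne (Function.LeftInverse.injective Sum.swap_leftInverse hf)
    · intro u v hne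
      have : f u ≠ f v := fun e => hne (congrArg Sum.swap e)
      exact (hr.2.2 u v this).trans (key (f u) (f v)).symm
  · intro c hc
    obtain ⟨s, hs, hinj⟩ := ha c hc
    refine ⟨fun h => s h.swap, fun h => ?_, ?_⟩
    · show Sum.swap (f (s h.swap)) = h
      rw [hs h.swap, Sum.swap_swap]
    · intro a b hab
      have := hinj hab
      simpa using congrArg Sum.swap this

/-- Restrict a replication graph of a join to the left part. -/
lemma restrictLeft {m : ℕ} {V₁ V₂ : Type} {H₁ : SimpleGraph V₁} {H₂ : SimpleGraph V₂}
    {G : SimpleGraph (Fin m)} {f : Fin m → V₁ ⊕ V₂}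
    (hr : IsReplication G (graphJoin H₁ H₂) f) (ha : ArrowsRR G (graphJoin H₁ H₂) f) :
    ∃ (G₁ : SimpleGraph {x : Fin m // ∃ a, f x = Sum.inl a})
      (f₁ : {x : Fin m // ∃ a, f x = Sum.inl a} → V₁),
      IsReplication G₁ H₁ f₁ ∧ ArrowsRR G₁ H₁ f₁ := by
  classical
  set f₁ : {x : Fin m // ∃ a, f x = Sum.inl a} → V₁ := fun x => Classical.choose x.2 with hf₁
  have hf : ∀ x : {x : Fin m // ∃ a, f x = Sum.inl a}, f x.1 = Sum.inl (f₁ x) :=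
    fun x => Classical.choose_spec x.2
  refine ⟨G.comap Subtype.val, f₁, ?_, ?_⟩
  · refine ⟨?_, ?_, ?_⟩
    · intro a
      obtain ⟨x, hx⟩ := hr.1 (Sum.inl a)
      exact ⟨⟨x, ⟨a, hx⟩⟩, Sum.inl.inj ((hf ⟨x, ⟨a, hx⟩⟩).symm.trans hx)⟩
    · intro u v hne hfe
      refine hr.2.1 u.1 v.1 (fun e => hne (Subtype.ext e)) ?_
      rw [hf u, hf v, hfe]
    · intro u v hne
      have hne' : f u.1 ≠ f v.1 := fun e =>
        hne (Sum.inl.inj ((hf u).symm.trans (e.trans (hf v))))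
      have h2 := hr.2.2 u.1 v.1 hne'
      have e : (graphJoin H₁ H₂).Adj (f u.1) (f v.1) ↔ H₁.Adj (f₁ u) (f₁ v) := by
        rw [hf u, hf v]
        exact Iff.rfl
      exact h2.trans e
  · intro c₁ hc₁
    set c : Fin m → ℕ :=
      fun x => if h : ∃ a, f x = Sum.inl a then 2 * c₁ ⟨x, h⟩ else 2 * x.1 + 1 with hcdef
    have hc : ∀ u v, G.Adj u v → c u ≠ c v := by
      intro u v huv
      by_cases hu : ∃ a, f u = Sum.inl a <;> by_cases hv : ∃ a, f v = Sum.inl a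
      · rw [hcdef]
        simp only [dif_pos hu, dif_pos hv]
        have : c₁ ⟨u, hu⟩ ≠ c₁ ⟨v, hv⟩ := hc₁ ⟨u, hu⟩ ⟨v, hv⟩ huv
        omega
      · rw [hcdef]; simp only [dif_pos hu, dif_neg hv]; omega
      · rw [hcdef]; simp only [dif_neg hu, dif_pos hv]; omega
      · rw [hcdef]
        simp only [dif_neg hu, dif_neg hv]
        have h1 : u ≠ v := G.ne_of_adj huv
        have h2 : (u : ℕ) ≠ (v : ℕ) := fun e => h1 (Fin.val_injective e)
        omega
    obtain ⟨s, hs, hinj⟩ := ha c hc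
    refine ⟨fun a => ⟨s (Sum.inl a), ⟨a, hs (Sum.inl a)⟩⟩, ?_, ?_⟩
    · intro a
      exact Sum.inl.inj
        ((hf ⟨s (Sum.inl a), ⟨a, hs (Sum.inl a)⟩⟩).symm.trans (hs (Sum.inl a)))
    · intro a b hab
      have h2 : c (s (Sum.inl a)) = c (s (Sum.inl b)) := by
        rw [hcdef]
        simp only [dif_pos (⟨a, hs (Sum.inl a)⟩ : ∃ x, f (s (Sum.inl a)) = Sum.inl x),
          dif_pos (⟨b, hs (Sum.inl b)⟩ : ∃ x, f (s (Sum.inl b)) = Sum.inl x)]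
        exact congrArg (2 * ·) hab
      exact Sum.inl.inj (hinj h2)

/-- `ρ_R(H₁ + H₂) = ρ_R(H₁) + ρ_R(H₂)` for the join of two graphs. -/
theorem stmt16 {V₁ V₂ : Type} [Fintype V₁] [Fintype V₂]
    (H₁ : SimpleGraph V₁) (H₂ : SimpleGraph V₂) :
    rhoR (graphJoin H₁ H₂) = rhoR H₁ + rhoR H₂ := by
  classical
  have hne₁ : {m : ℕ | ∃ (G : SimpleGraph (Fin m)) (f : Fin m → V₁),
      IsReplication G H₁ f ∧ ArrowsRR G H₁ f}.Nonempty := by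
    obtain ⟨m, G, f, h1, h2⟩ := existsRep H₁
    exact ⟨m, G, f, h1, h2⟩
  have hne₂ : {m : ℕ | ∃ (G : SimpleGraph (Fin m)) (f : Fin m → V₂),
      IsReplication G H₂ f ∧ ArrowsRR G H₂ f}.Nonempty := by
    obtain ⟨m, G, f, h1, h2⟩ := existsRep H₂
    exact ⟨m, G, f, h1, h2⟩
  have hneJ : {m : ℕ | ∃ (G : SimpleGraph (Fin m)) (f : Fin m → V₁ ⊕ V₂),
      IsReplication G (graphJoin H₁ H₂) f ∧ ArrowsRR G (graphJoin H₁ H₂) f}.Nonempty := by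
    obtain ⟨m, G, f, h1, h2⟩ := existsRep (graphJoin H₁ H₂)
    exact ⟨m, G, f, h1, h2⟩
  apply le_antisymm
  · -- upper bound: join of optimal replication graphs
    obtain ⟨G₁, f₁, hr₁, ha₁⟩ := Nat.sInf_mem hne₁
    obtain ⟨G₂, f₂, hr₂, ha₂⟩ := Nat.sInf_mem hne₂
    obtain ⟨hrj, haj⟩ := joinRep hr₁ ha₁ hr₂ ha₂
    obtain ⟨G', f', h1, h2⟩ := transportRep finSumFinEquiv _ _ _ hrj haj
    exact Nat.sInf_le ⟨G', f', h1, h2⟩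
  · -- lower bound
    refine le_csInf hneJ ?_
    rintro m ⟨G, f, hr, ha⟩
    obtain ⟨G₁, f₁, hr₁, ha₁⟩ := restrictLeft hr ha
    obtain ⟨hrs, has⟩ := swapRep hr ha
    obtain ⟨G₂, f₂, hr₂, ha₂⟩ := restrictLeft hrs has
    set m₁ := Fintype.card {x : Fin m // ∃ a, f x = Sum.inl a} with hm₁
    set m₂ := Fintype.card {x : Fin m // ∃ b, (Sum.swap ∘ f) x = Sum.inl b} with hm₂
    have hle₁ : rhoR H₁ ≤ m₁ := by
      obtain ⟨G', f', h1, h2⟩ := transportRep (Fintype.equivFin _) _ _ _ hr₁ ha₁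
      exact Nat.sInf_le ⟨G', f', h1, h2⟩
    have hle₂ : rhoR H₂ ≤ m₂ := by
      obtain ⟨G', f', h1, h2⟩ := transportRep (Fintype.equivFin _) _ _ _ hr₂ ha₂
      exact Nat.sInf_le ⟨G', f', h1, h2⟩
    have hQP : ∀ x : Fin m,
        (∃ b, (Sum.swap ∘ f) x = Sum.inl b) ↔ ¬ (∃ a, f x = Sum.inl a) := by
      intro x
      cases hfx : f x with
      | inl a => simp [Function.comp, hfx]
      | inr b => simp [Function.comp, hfx]
    have hcard2 : m₂ = Fintype.card {x : Fin m // ¬ (∃ a, f x = Sum.inl a)} := by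
      rw [hm₂]
      exact Fintype.card_congr (Equiv.subtypeEquivRight hQP)
    have hsum : m₁ + m₂ = m := by
      rw [hm₁, hcard2]
      have := Fintype.card_congr (Equiv.sumCompl (fun x : Fin m => ∃ a, f x = Sum.inl a))
      rw [Fintype.card_sum] at this
      simpa using this
    omega
end

section
/- For the path P_n on n vertices: if n is odd then (n+1)²/4 ≤ ρ(P_n) ≤ 1 + n(n−1)/2, and if n is even then n(n+2)/4 ≤ ρ(P_n) ≤ 1 + n(n−1)/2. In particular ρ(P_3) = 4. -/
/-- A "rainbow induced path sequence" property: every proper coloring admits a sequence of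
`m` vertices with pairwise distinct colors, whose induced adjacencies occur only between
consecutive entries. -/
def GoodSeq {α : Type} (G : SimpleGraph α) (m : ℕ) : Prop :=
  ∀ c : α → ℕ, (∀ u v : α, G.Adj u v → c u ≠ c v) →
    ∃ v : Fin m → α, (∀ i j : Fin m, G.Adj (v i) (v j) → (i : ℕ) + 1 = j ∨ (j : ℕ) + 1 = i) ∧
      Function.Injective (c ∘ v)

/-- `Tsum m = ∑_{s=1}^m ⌈s/2⌉`. -/
def Tsum (m : ℕ) : ℕ := ∑ s ∈ Finset.range m, (s / 2 + 1)

lemma Tsum_succ (m : ℕ) : Tsum (m + 1) = Tsum m + (m / 2 + 1) := by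
  simp [Tsum, Finset.sum_range_succ]

lemma Tsum_closed (k : ℕ) : Tsum (2 * k) = k * (k + 1) ∧ Tsum (2 * k + 1) = (k + 1) ^ 2 := by
  induction k with
  | zero => constructor <;> simp [Tsum]
  | succ k ih =>
    obtain ⟨h1, h2⟩ := ih
    have e1 : 2 * (k + 1) = (2 * k + 1) + 1 := by ring
    have e2 : 2 * (k + 1) + 1 = ((2 * k + 1) + 1) + 1 := by ring
    constructor
    · rw [e1, Tsum_succ, h2]
      have : (2 * k + 1) / 2 = k := by omega
      rw [this]
      ring
    · have e3 : 2 * k + 2 = (2 * k + 1) + 1 := by ring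
      rw [e2, Tsum_succ, e3, Tsum_succ, h2]
      have h3 : (2 * k + 1) / 2 = k := by omega
      have h4 : (2 * k + 1 + 1) / 2 = k + 1 := by omega
      rw [h3]
      ring_nf
      omega

lemma goodSeq_card_bound :
    ∀ (m : ℕ) (α : Type) [Fintype α] [DecidableEq α] (G : SimpleGraph α),
      GoodSeq G m → Tsum m ≤ Fintype.card α := by
  intro m
  induction m with
  | zero => intro α _ _ G _; simp [Tsum]
  | succ m ih =>
    intro α _ _ G hGood
    -- an injective (hence proper) coloring
    set c₀ : α → ℕ := fun a => ((Fintype.equivFin α) a : ℕ) with hc₀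
    have hc₀inj : Function.Injective c₀ :=
      Fin.val_injective.comp (Fintype.equivFin α).injective
    obtain ⟨v, hvadj, hvcinj⟩ := hGood c₀ (fun u w h => fun he => G.ne_of_adj h (hc₀inj he))
    have hvinj : Function.Injective v := fun a b h => hvcinj (by simp [Function.comp, h])
    -- the independent set of even-indexed vertices
    set ev : Fin (m / 2 + 1) → α := fun j => v ⟨2 * (j : ℕ), by omega⟩ with hev
    have hevinj : Function.Injective ev := by
      intro a b h
      have := hvinj h
      have := Fin.mk.injEq _ _ _ _ ▸ this
      exact Fin.ext (by omega)
    set I : Finset α := Finset.image ev Finset.univ with hI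
    have hIcard : I.card = m / 2 + 1 := by
      rw [hI, Finset.card_image_of_injective _ hevinj, Finset.card_univ, Fintype.card_fin]
    have hImem : ∀ a, a ∈ I ↔ ∃ j, ev j = a := by
      intro a; simp [hI]
    have hIindep : ∀ u w, u ∈ I → w ∈ I → ¬ G.Adj u w := by
      intro u w hu hw hadj
      obtain ⟨j1, rfl⟩ := (hImem u).1 hu
      obtain ⟨j2, rfl⟩ := (hImem w).1 hw
      have := hvadj _ _ hadj
      simp only [hev] at this
      omega
    -- the remaining graph
    have hGood' : GoodSeq (SimpleGraph.comap (fun b : {a : α // a ∉ I} => (b : α)) G) m := by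
      intro c' hc'
      set γ : ℕ := (Finset.univ.sup fun b : {a : α // a ∉ I} => c' b) + 1 with hγdef
      have hγ : ∀ b : {a : α // a ∉ I}, c' b < γ :=
        fun b => Nat.lt_succ_of_le (Finset.le_sup (Finset.mem_univ b))
      set c : α → ℕ := fun a => if h : a ∈ I then γ else c' ⟨a, h⟩ with hc
      have hcI : ∀ a (h : a ∈ I), c a = γ := by intro a h; simp [hc, h]
      have hcN : ∀ a (h : a ∉ I), c a = c' ⟨a, h⟩ := by intro a h; simp [hc, h]
      have hcproper : ∀ u w, G.Adj u w → c u ≠ c w := by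
        intro u w hadj
        by_cases hu : u ∈ I <;> by_cases hw : w ∈ I
        · exact absurd hadj (hIindep u w hu hw)
        · rw [hcI u hu, hcN w hw]; exact (hγ ⟨w, hw⟩).ne'
        · rw [hcN u hu, hcI w hw]; exact (hγ ⟨u, hu⟩).ne
        · rw [hcN u hu, hcN w hw]; exact hc' ⟨u, hu⟩ ⟨w, hw⟩ hadj
      obtain ⟨w, hwadj, hwcinj⟩ := hGood c hcproper
      -- at most one entry of w lies in I; find an index p covering all such entries
      have hp : ∃ p : Fin (m + 1), ∀ k : Fin (m + 1), k ≠ p → w k ∉ I := by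
        by_cases hex : ∃ k, w k ∈ I
        · obtain ⟨p, hpI⟩ := hex
          refine ⟨p, fun k hk hkI => hk ?_⟩
          apply hwcinj
          simp only [Function.comp, hcI _ hkI, hcI _ hpI]
        · exact ⟨⟨0, Nat.succ_pos m⟩, fun k _ hkI => hex ⟨k, hkI⟩⟩
      obtain ⟨p, hpkey⟩ := hp
      refine ⟨fun i => ⟨w (p.succAbove i), hpkey _ (Fin.succAbove_ne p i)⟩, ?_, ?_⟩
      · intro i j hadj
        have hval : ∀ t : Fin m, ((p.succAbove t : Fin (m + 1)) : ℕ) =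
            if (t : ℕ) < (p : ℕ) then (t : ℕ) else (t : ℕ) + 1 := by
          intro t
          rw [Fin.succAbove]
          split
          · rename_i h
            rw [if_pos (by simpa [Fin.lt_def] using h)]
            simp
          · rename_i h
            rw [if_neg (by simpa [Fin.lt_def] using h)]
            simp
        have := hwadj _ _ (by simpa [SimpleGraph.comap_adj] using hadj)
        rw [hval i, hval j] at this
        split at this <;> split at this <;> omega
      · have : (fun i : Fin m => c' ⟨w (p.succAbove i), hpkey _ (Fin.succAbove_ne p i)⟩)
            = fun i : Fin m => c (w (p.succAbove i)) := by
          funext i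
          rw [hcN _ (hpkey _ (Fin.succAbove_ne p i))]
        intro a b h
        simp only [Function.comp] at h
        rw [congrFun this a, congrFun this b] at h
        exact Fin.succAbove_right_injective (hwcinj (by simpa [Function.comp] using h))
    have hbeta := ih {a : α // a ∉ I} (SimpleGraph.comap _ G) hGood'
    have hcb : Fintype.card {a : α // a ∉ I} = Fintype.card α - I.card := by
      rw [Fintype.card_subtype_compl, Fintype.card_coe]
    have hIle : I.card ≤ Fintype.card α := by
      rw [← Finset.card_univ]; exact Finset.card_le_univ I
    rw [Tsum_succ]
    omega

lemma arrowsR_goodSeq {α : Type} {G : SimpleGraph α} {n : ℕ}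
    (h : ArrowsR G (SimpleGraph.pathGraph n)) : GoodSeq G n := by
  intro c hc
  obtain ⟨f, hf⟩ := h c hc
  refine ⟨f, ?_, hf⟩
  intro i j hadj
  have := f.map_adj_iff.1 hadj
  rw [SimpleGraph.pathGraph_adj] at this
  exact this

/-- Vertex type of the blown-up path: one extra vertex (`none`) plus, for each
`k < n - 1`, a clique of size `k + 1`. -/
abbrev PathVert (n : ℕ) := Option ((k : Fin (n - 1)) × Fin ((k : ℕ) + 1))

/-- Block index of a vertex. -/
def bv {n : ℕ} : PathVert n → ℕ := fun v => v.elim 0 (fun x => (x.1 : ℕ) + 1)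

/-- The blown-up path graph: two distinct vertices are adjacent iff their block
indices differ by at most 1. -/
def BG (n : ℕ) : SimpleGraph (PathVert n) :=
  SimpleGraph.fromRel (fun u v => bv u ≤ bv v + 1 ∧ bv v ≤ bv u + 1)

lemma BG_adj {n : ℕ} (u v : PathVert n) :
    (BG n).Adj u v ↔ u ≠ v ∧ bv u ≤ bv v + 1 ∧ bv v ≤ bv u + 1 := by
  rw [BG, SimpleGraph.fromRel_adj]
  constructor
  · rintro ⟨h, h2 | h2⟩ <;> exact ⟨h, by omega, by omega⟩
  · rintro ⟨h, h1, h2⟩; exact ⟨h, Or.inl ⟨h1, h2⟩⟩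

lemma exists_greedy_seq {n : ℕ} (c : PathVert n → ℕ)
    (hc : ∀ u v, (BG n).Adj u v → c u ≠ c v) :
    ∀ k, k ≤ n → ∃ s : Fin k → PathVert n,
      (∀ i : Fin k, bv (s i) = (i : ℕ)) ∧ Function.Injective (c ∘ s) := by
  intro k
  induction k with
  | zero =>
    intro _
    exact ⟨Fin.elim0, fun i => i.elim0, fun a => a.elim0⟩
  | succ k ihk =>
    intro hk
    obtain ⟨s, hb, hinj⟩ := ihk (by omega)
    -- find a new vertex in block k with a fresh color
    have hx : ∃ x : PathVert n, bv x = k ∧ ∀ i : Fin k, c x ≠ c (s i) := by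
      match k, hk, s, hb, hinj with
      | 0, hk, s, hb, hinj => exact ⟨none, rfl, fun i => i.elim0⟩
      | (j+1), hk, s, hb, hinj =>
        have hj : j < n - 1 := by omega
        set xt : Fin (j + 1) → PathVert n := fun t => some ⟨⟨j, hj⟩, t⟩ with hxt
        have hbxt : ∀ t, bv (xt t) = j + 1 := fun t => rfl
        have hxtinj : Function.Injective (c ∘ xt) := by
          intro a b h
          by_contra hne
          refine hc (xt a) (xt b) ?_ h
          rw [BG_adj]
          refine ⟨?_, by simp [hbxt], by simp [hbxt]⟩
          simp only [hxt, ne_eq, Option.some.injEq, Sigma.mk.inj_iff, heq_eq_eq, true_and]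
          exact fun hab => hne (by exact hab ▸ rfl)
        set lastv : PathVert n := s ⟨j, by omega⟩ with hlastv
        have hblast : bv lastv = j := hb _
        have hadjlast : ∀ t, (BG n).Adj (xt t) lastv := by
          intro t
          rw [BG_adj]
          refine ⟨?_, by simp only [hbxt, hblast]; omega, by simp only [hbxt, hblast]; omega⟩
          intro he
          have := congrArg bv he
          simp only [hbxt, hblast] at this
          omega
        -- colors of block k+1 = j+1 candidates vs forbidden colors
        set A : Finset ℕ := Finset.image (c ∘ xt) Finset.univ with hA
        set F : Finset ℕ := Finset.image (c ∘ s) Finset.univ with hF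
        have hAcard : A.card = j + 1 := by
          rw [hA, Finset.card_image_of_injective _ hxtinj, Finset.card_univ, Fintype.card_fin]
        have hFcard : F.card = j + 1 := by
          rw [hF, Finset.card_image_of_injective _ hinj, Finset.card_univ, Fintype.card_fin]
        have hlastF : c lastv ∈ F := by
          rw [hF]
          exact Finset.mem_image.2 ⟨⟨j, by omega⟩, Finset.mem_univ _, rfl⟩
        have hcard2 : (F.erase (c lastv)).card < A.card := by
          rw [Finset.card_erase_of_mem hlastF, hAcard, hFcard]
          omega
        have hnsub : ¬ A ⊆ F.erase (c lastv) := fun hsub =>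
          absurd (Finset.card_le_card hsub) (by omega)
        obtain ⟨a, haA, haF⟩ := Finset.not_subset.1 hnsub
        obtain ⟨t, _, hta⟩ := Finset.mem_image.1 haA
        refine ⟨xt t, hbxt t, ?_⟩
        intro i he
        have hne_last : c (xt t) ≠ c lastv := hc _ _ (hadjlast t)
        have : c (xt t) ∈ F := by
          rw [hF]; exact Finset.mem_image.2 ⟨i, Finset.mem_univ _, he.symm⟩
        have : c (xt t) ∈ F.erase (c lastv) := Finset.mem_erase.2 ⟨hne_last, this⟩
        rw [← hta] at haF
        exact haF (by simpa using this)
    obtain ⟨x, hxb, hxc⟩ := hx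
    refine ⟨Fin.snoc s x, ?_, ?_⟩
    · intro i
      refine Fin.lastCases ?_ ?_ i
      · rw [Fin.snoc_last]; exact hxb
      · intro i'; rw [Fin.snoc_castSucc]; simpa using hb i'
    · intro a b h
      simp only [Function.comp] at h
      rcases Fin.eq_castSucc_or_eq_last a with ⟨a', rfl⟩ | rfl <;>
        rcases Fin.eq_castSucc_or_eq_last b with ⟨b', rfl⟩ | rfl
      · rw [Fin.snoc_castSucc, Fin.snoc_castSucc] at h
        exact congrArg Fin.castSucc (hinj (show (c ∘ s) a' = (c ∘ s) b' from h))
      · rw [Fin.snoc_castSucc, Fin.snoc_last] at h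
        exact absurd h.symm (hxc a')
      · rw [Fin.snoc_last, Fin.snoc_castSucc] at h
        exact absurd h (hxc b')
      · rfl

lemma arrowsR_BG (n : ℕ) : ArrowsR (BG n) (SimpleGraph.pathGraph n) := by
  intro c hc
  obtain ⟨s, hb, hinj⟩ := exists_greedy_seq c hc n le_rfl
  have hsinj : Function.Injective s := by
    intro a b h
    have := congrArg bv h
    rw [hb, hb] at this
    exact Fin.ext this
  refine ⟨⟨⟨s, hsinj⟩, ?_⟩, hinj⟩
  intro a b
  simp only [Function.Embedding.coeFn_mk]
  rw [BG_adj, SimpleGraph.pathGraph_adj, hb, hb]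
  constructor
  · rintro ⟨hne, h1, h2⟩
    have : (a : ℕ) ≠ (b : ℕ) := fun hv => hne (congrArg s (Fin.ext hv))
    omega
  · intro h
    refine ⟨fun he => ?_, by omega, by omega⟩
    have := congrArg bv he
    rw [hb, hb] at this
    omega

lemma card_PathVert (n : ℕ) : Fintype.card (PathVert n) = 1 + n * (n - 1) / 2 := by
  rw [Fintype.card_option, Fintype.card_sigma]
  simp only [Fintype.card_fin]
  rw [Fin.sum_univ_eq_sum_range (fun k => k + 1) (n - 1)]
  rcases n with _ | m
  · simp
  · have h0 : (m + 1) - 1 = m := by omega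
    rw [h0]
    have h1 : ∑ i ∈ Finset.range (m + 1), i = (∑ i ∈ Finset.range m, (i + 1)) + 0 :=
      Finset.sum_range_succ' (fun i => i) m
    have h2 := Finset.sum_range_id_mul_two (m + 1)
    have h3 : (m + 1) - 1 = m := by omega
    rw [h3] at h2
    set P := (m + 1) * m with hP
    omega

lemma rho_path_upper (n : ℕ) :
    (1 + n * (n - 1) / 2) ∈ {m : ℕ | ∃ G : SimpleGraph (Fin m), ArrowsR G (SimpleGraph.pathGraph n)} := by
  have hcard := card_PathVert n
  rw [← hcard]
  set e := Fintype.equivFin (PathVert n) with he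
  refine ⟨SimpleGraph.comap (⇑e.symm) (BG n), ?_⟩
  intro c hc
  have hc' : ∀ u v, (BG n).Adj u v → (c ∘ e) u ≠ (c ∘ e) v := by
    intro u v hadj
    apply hc
    show (BG n).Adj (e.symm (e u)) (e.symm (e v))
    simpa using hadj
  obtain ⟨f, hf⟩ := arrowsR_BG n (c ∘ e) hc'
  refine ⟨⟨⟨fun h => e (f h), fun a b hab => f.injective (e.injective hab)⟩, ?_⟩, hf⟩
  intro a b
  simp only [Function.Embedding.coeFn_mk, SimpleGraph.comap_adj, Equiv.symm_apply_apply]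
  show (BG n).Adj (e.symm (e (f a))) (e.symm (e (f b))) ↔ _
  rw [Equiv.symm_apply_apply, Equiv.symm_apply_apply]
  exact f.map_adj_iff

lemma rho_path_lower (n : ℕ) : Tsum n ≤ rho (SimpleGraph.pathGraph n) := by
  refine le_csInf ⟨1 + n * (n - 1) / 2, rho_path_upper n⟩ ?_
  rintro m ⟨G, hG⟩
  have := goodSeq_card_bound n (Fin m) G (arrowsR_goodSeq hG)
  simpa using this

lemma rho_path_le (n : ℕ) : rho (SimpleGraph.pathGraph n) ≤ 1 + n * (n - 1) / 2 :=
  Nat.sInf_le (rho_path_upper n)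

/-- Bounds for paths: for odd `n`, `(n+1)²/4 ≤ ρ(P_n) ≤ 1 + n(n−1)/2`; for even `n`,
`n(n+2)/4 ≤ ρ(P_n) ≤ 1 + n(n−1)/2`. In particular `ρ(P_3) = 4`. -/
theorem stmt18 (n : ℕ) :
    (Odd n → (n + 1) ^ 2 / 4 ≤ rho (SimpleGraph.pathGraph n) ∧
      rho (SimpleGraph.pathGraph n) ≤ 1 + n * (n - 1) / 2) ∧
    (Even n → n * (n + 2) / 4 ≤ rho (SimpleGraph.pathGraph n) ∧
      rho (SimpleGraph.pathGraph n) ≤ 1 + n * (n - 1) / 2) ∧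
    rho (SimpleGraph.pathGraph 3) = 4 := by
  refine ⟨fun hodd => ⟨?_, rho_path_le n⟩, fun heven => ⟨?_, rho_path_le n⟩, ?_⟩
  · obtain ⟨k, rfl⟩ := hodd
    have h1 : (2 * k + 1 + 1) ^ 2 = (k + 1) ^ 2 * 4 := by ring
    rw [h1, Nat.mul_div_cancel _ (by norm_num : (0:ℕ) < 4)]
    rw [← (Tsum_closed k).2]
    exact rho_path_lower _
  · obtain ⟨k, rfl⟩ := heven
    have h1 : (k + k) * (k + k + 2) = (k * (k + 1)) * 4 := by ring
    rw [h1, Nat.mul_div_cancel _ (by norm_num : (0:ℕ) < 4)]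
    have h2 : k + k = 2 * k := by ring
    rw [h2, ← (Tsum_closed k).1]
    exact rho_path_lower _
  · refine le_antisymm (by simpa using rho_path_le 3) ?_
    have := rho_path_lower 3
    have h3 : Tsum 3 = 4 := by
      have := (Tsum_closed 1).2
      norm_num at this
      simpa using this
    omega
end
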